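/- Suppose n = 2m is even, x_0 > x_1 > ... > x_n are real, and {p_k}_{k=0}^n is defined by the recurrence p_{k+1}(x) + p_{k-1}(x) = (a_k x + b_k) p_k(x) with a_k > 0 and reflection symmetry a_k = a_{n−k}, b_k = b_{n−k} for 1 ≤ k ≤ n−1. If p_m(x_j) = 0 for all odd j and p_{m+1}(x_j) = p_{m−1}(x_j) for all even j (0 ≤ j ≤ n), then p_{n−k}(x_j) = (−1)^j p_k(x_j) for all 0 ≤ j, k ≤ n. -/
import Mathlib


open Polynomial Finset

theorem alternation_even (n m : ℕ) (hm : 1 ≤ m) (hn : n = 2*m)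
    (x : ℕ → ℝ) (hx : ∀ j, j < n → x (j+1) < x j)
    (a b : ℕ → ℝ) (p : ℕ → Polynomial ℝ)
    (hp0 : p 0 = 1)
    (hp1 : p 1 = C (a 0) * X + C (b 0))
    (hrec : ∀ k, 1 ≤ k → k ≤ n - 1 →
      p (k+1) + p (k-1) = (C (a k) * X + C (b k)) * p k)
    (hpos : ∀ k, k ≤ n - 1 → 0 < a k)
    (hrefl : ∀ k, 1 ≤ k → k ≤ n - 1 → a k = a (n - k) ∧ b k = b (n - k))
    (hodd : ∀ j, j ≤ n → Odd j → (p m).eval (x j) = 0)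
    (heven : ∀ j, j ≤ n → Even j → (p (m+1)).eval (x j) = (p (m-1)).eval (x j)) :
    ∀ j k, j ≤ n → k ≤ n → (p (n - k)).eval (x j) = (-1)^j * (p k).eval (x j) := by
  intro j k hj hk
  have key : ∀ i, (i ≤ m → (p (m+i)).eval (x j) = (-1)^j * (p (m-i)).eval (x j))
      ∧ (i+1 ≤ m → (p (m+(i+1))).eval (x j) = (-1)^j * (p (m-(i+1))).eval (x j)) := by
    intro i
    induction i with
    | zero =>
      constructor
      · intro _
        rcases Nat.even_or_odd j with he | ho
        · rw [Even.neg_one_pow he]; simp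
        · rw [Odd.neg_one_pow ho]
          have h0 := hodd j hj ho
          simp [h0]
      · intro _
        rcases Nat.even_or_odd j with he | ho
        · rw [Even.neg_one_pow he]
          have := heven j hj he
          simpa using this
        · rw [Odd.neg_one_pow ho]
          have h0 := hodd j hj ho
          have hr := hrec m hm (by omega)
          have c := congrArg (fun q => Polynomial.eval (x j) q) hr
          simp [h0] at c
          have h1 : m - 1 + 1 = m := by omega
          linarith [c]
    | succ i ih =>
      refine ⟨ih.2, ?_⟩
      intro h2
      have e1 := ih.1 (by omega)
      have e2 := ih.2 (by omega)
      have hr1 := hrec (m+(i+1)) (by omega) (by omega)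
      have hr2 := hrec (m-(i+1)) (by omega) (by omega)
      have hrefl1 := hrefl (m-(i+1)) (by omega) (by omega)
      have hna : n - (m - (i+1)) = m + (i+1) := by omega
      rw [hna] at hrefl1
      have c1 := congrArg (fun q => Polynomial.eval (x j) q) hr1
      have c2 := congrArg (fun q => Polynomial.eval (x j) q) hr2
      simp only [eval_add, eval_mul, eval_C, eval_X] at c1 c2
      have hi2 : m + (i+1) - 1 = m + i := by omega
      have hi3 : m - (i+1) - 1 = m - (i+1+1) := by omega
      have hi4 : m - (i+1) + 1 = m - i := by omega
      rw [hi2] at c1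
      rw [hi3, hi4, hrefl1.1, hrefl1.2] at c2
      have hs : m + (i+1) + 1 = m + (i+1+1) := by omega
      rw [hs] at c1
      linear_combination c1 - (-1:ℝ)^j * c2 +
        (a (m+(i+1)) * x j + b (m+(i+1))) * e2 - e1
  rcases le_or_gt k m with hkm | hkm
  · have hk1 : m + (m - k) = n - k := by omega
    have hk2 : m - (m - k) = k := by omega
    have := (key (m - k)).1 (by omega)
    rw [hk1, hk2] at this
    exact this
  · have hk1 : m + (k - m) = k := by omega
    have hk2 : m - (k - m) = n - k := by omega
    have h := (key (k - m)).1 (by omega)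
    rw [hk1, hk2] at h
    have hsq : ((-1:ℝ)^j) * ((-1:ℝ)^j) = 1 := by
      rw [← pow_add]
      exact Even.neg_one_pow ⟨j, rfl⟩
    rw [h, ← mul_assoc, hsq, one_mul]
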